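/- Let S be a b-weakly right cancellative semigroup (for some b ∈ ℕ) and let A ⊆ S be thick, meaning for every finite nonempty F ⊆ S there exists s ∈ S with Fs ⊆ A. Then A is a D-set with respect to every net F in P_f(S). -/

import Mathlib

open scoped Classical symmDiff

/-- The translate `F · s` of a finite piece `F` by an element of `S ∪ {1}`
(`none` meaning "no shift"). -/
def netShift {S : Type*} [Mul S] (F : Set S) : Option S → Set S
  | none => F
  | some t => (· * t) '' F

/-- Upper Banach density of `A ⊆ S` with respect to a net `F = ⟨F i⟩` of finite
nonempty subsets of `S`, indexed by a directed preorder `I`. -/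
noncomputable def uBD {S : Type*} [Mul S] {I : Type*} [Preorder I]
    (F : I → Set S) (A : Set S) : ℝ :=
  sSup {α : ℝ | ∀ i₀ : I, ∃ i, i₀ ≤ i ∧ ∃ s : Option S,
    α * ((F i).ncard : ℝ) ≤ ((A ∩ netShift (F i) s).ncard : ℝ)}

attribute [local instance] Ultrafilter.mul

universe u

section Aux

variable {S : Type*} [Semigroup S] {I : Type*} [Preorder I]

/-- The defining predicate inside `uBD`. -/
def dgood (F : I → Set S) (C : Set S) (α : ℝ) : Prop :=
  ∀ i₀ : I, ∃ i, i₀ ≤ i ∧ ∃ s : Option S,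
    α * ((F i).ncard : ℝ) ≤ ((C ∩ netShift (F i) s).ncard : ℝ)

lemma uBD_eq_sSup (F : I → Set S) (C : Set S) : uBD F C = sSup {α | dgood F C α} := rfl

lemma netShift_finite {F : Set S} (hF : F.Finite) (s : Option S) : (netShift F s).Finite := by
  cases s with
  | none => exact hF
  | some t => exact hF.image _

lemma netShift_ncard_le {F : Set S} (hF : F.Finite) (s : Option S) :
    (netShift F s).ncard ≤ F.ncard := by
  cases s with
  | none => exact le_refl _
  | some t => exact Set.ncard_image_le hF

lemma dgood_zero (F : I → Set S) (C : Set S) : dgood F C 0 := fun i₀ =>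
  ⟨i₀, le_refl _, none, by rw [zero_mul]; exact Nat.cast_nonneg _⟩

lemma uBD_pos_iff [Nonempty I] {F : I → Set S} (hfin : ∀ i, (F i).Finite)
    (hne : ∀ i, (F i).Nonempty) (C : Set S) :
    0 < uBD F C ↔ ∃ α > 0, dgood F C α := by
  have hnemp : {α | dgood F C α}.Nonempty := ⟨0, dgood_zero F C⟩
  have hbdd : BddAbove {α | dgood F C α} := by
    refine ⟨1, fun α hα => ?_⟩
    obtain ⟨i, -, s, hle⟩ := hα (Classical.arbitrary I)
    have hn : 0 < ((F i).ncard : ℝ) := by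
      exact_mod_cast (Set.ncard_pos (hfin i)).2 (hne i)
    have h2 : ((C ∩ netShift (F i) s).ncard : ℝ) ≤ ((F i).ncard : ℝ) := by
      exact_mod_cast le_trans
        (Set.ncard_le_ncard Set.inter_subset_right (netShift_finite (hfin i) s))
        (netShift_ncard_le (hfin i) s)
    nlinarith
  rw [uBD_eq_sSup]
  constructor
  · intro h
    obtain ⟨α, hα, h0⟩ := exists_lt_of_lt_csSup hnemp h
    exact ⟨α, h0, hα⟩
  · rintro ⟨α, h0, hα⟩
    exact lt_of_lt_of_le h0 (le_csSup hbdd hα)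

lemma mem_ultra_mul_iff {M : Type*} [Mul M] (U V : Ultrafilter M) (A : Set M) :
    A ∈ U * V ↔ {m : M | {m' : M | m * m' ∈ A} ∈ V} ∈ U := Iff.rfl

/-- The key counting lemma: if the "pullback" set of `C` along `r` has positive density
witness `α`, then `C` has density witness `α / b`. -/
lemma dgood_pull {F : I → Set S} (hfin : ∀ i, (F i).Finite) {b : ℕ} (hbpos : 0 < b)
    (hb : ∀ t u : S, {s : S | s * t = u}.Finite ∧ {s : S | s * t = u}.ncard ≤ b)
    {C : Set S} {r : Ultrafilter S} {α : ℝ} (hα : 0 < α)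
    (hg : dgood F {a : S | {x : S | a * x ∈ C} ∈ r} α) :
    dgood F C (α / b) := by
  classical
  intro i₀
  obtain ⟨i, hi, s, hcard⟩ := hg i₀
  set B := {a : S | {x : S | a * x ∈ C} ∈ r} with hB
  set H := B ∩ netShift (F i) s with hH
  have hHfin : H.Finite := (netShift_finite (hfin i) s).subset Set.inter_subset_right
  have hInt : (⋂ a ∈ H, {x : S | a * x ∈ C}) ∈ r :=
    (Filter.biInter_mem hHfin).2 fun a ha => ha.1
  obtain ⟨t, ht⟩ := Ultrafilter.nonempty_of_mem hInt
  simp only [Set.mem_iInter] at ht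
  obtain ⟨s', hs'⟩ : ∃ s' : Option S, (· * t) '' H ⊆ C ∩ netShift (F i) s' := by
    cases s with
    | none =>
        refine ⟨some t, ?_⟩
        rintro y ⟨a, ha, rfl⟩
        exact ⟨ht a ha, ⟨a, ha.2, rfl⟩⟩
    | some u =>
        refine ⟨some (u * t), ?_⟩
        rintro y ⟨a, ha, rfl⟩
        refine ⟨ht a ha, ?_⟩
        obtain ⟨x, hx, rfl⟩ := ha.2
        exact ⟨x, hx, (mul_assoc x u t).symm⟩
  have hcount : H.ncard ≤ b * ((· * t) '' H).ncard := by
    have key : hHfin.toFinset.card ≤ b * (hHfin.toFinset.image (· * t)).card := by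
      refine Finset.card_le_mul_card_image _ b fun y _ => ?_
      have hsub : {a ∈ hHfin.toFinset | a * t = y} ⊆ (hb t y).1.toFinset := by
        intro a ha
        simp only [Finset.mem_filter] at ha
        simpa using ha.2
      calc {a ∈ hHfin.toFinset | a * t = y}.card
          ≤ (hb t y).1.toFinset.card := Finset.card_le_card hsub
        _ = {s : S | s * t = y}.ncard := (Set.ncard_eq_toFinset_card _ (hb t y).1).symm
        _ ≤ b := (hb t y).2
    have h1 : H.ncard = hHfin.toFinset.card := Set.ncard_eq_toFinset_card _ hHfin
    have h2 : ((· * t) '' H).ncard = (hHfin.toFinset.image (· * t)).card := by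
      rw [← Set.ncard_coe_finset (hHfin.toFinset.image (· * t)), Finset.coe_image,
        hHfin.coe_toFinset]
    rw [h1, h2]
    exact key
  have hTfin : (C ∩ netShift (F i) s').Finite :=
    (netShift_finite (hfin i) s').subset Set.inter_subset_right
  have himg_le : ((· * t) '' H).ncard ≤ (C ∩ netShift (F i) s').ncard :=
    Set.ncard_le_ncard hs' hTfin
  refine ⟨i, hi, s', ?_⟩
  have hb0 : (0 : ℝ) < b := by exact_mod_cast hbpos
  rw [div_mul_eq_mul_div, div_le_iff₀ hb0]
  have hc1 : (H.ncard : ℝ) ≤ (b : ℝ) * ((· * t) '' H).ncard := by exact_mod_cast hcount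
  have hc2 : ((· * t) '' H).ncard ≤ ((C ∩ netShift (F i) s').ncard : ℝ) := by
    exact_mod_cast himg_le
  nlinarith [hcard]

lemma dgood_union {F : I → Set S} (hdir : ∀ i j : I, ∃ k, i ≤ k ∧ j ≤ k)
    {B C : Set S} (hB : ¬ ∃ α > 0, dgood F B α) (hC : ¬ ∃ α > 0, dgood F C α) :
    ¬ ∃ α > 0, dgood F (B ∪ C) α := by
  rintro ⟨α, hα, hg⟩
  have h2 : 0 < α / 2 := half_pos hα
  have hB' : ¬ dgood F B (α / 2) := fun h => hB ⟨α / 2, h2, h⟩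
  have hC' : ¬ dgood F C (α / 2) := fun h => hC ⟨α / 2, h2, h⟩
  unfold dgood at hB' hC'
  push_neg at hB' hC'
  obtain ⟨iB, hiB⟩ := hB'
  obtain ⟨iC, hiC⟩ := hC'
  obtain ⟨k, hk1, hk2⟩ := hdir iB iC
  obtain ⟨i, hik, s, hle⟩ := hg k
  have hBlt := hiB i (le_trans hk1 hik) s
  have hClt := hiC i (le_trans hk2 hik) s
  have hsplit : ((B ∪ C) ∩ netShift (F i) s).ncard
      ≤ (B ∩ netShift (F i) s).ncard + (C ∩ netShift (F i) s).ncard := by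
    rw [Set.union_inter_distrib_right]
    exact Set.ncard_union_le _ _
  have hsplit' : (((B ∪ C) ∩ netShift (F i) s).ncard : ℝ)
      ≤ ((B ∩ netShift (F i) s).ncard : ℝ) + ((C ∩ netShift (F i) s).ncard : ℝ) := by
    exact_mod_cast hsplit
  linarith

end Aux

theorem thick_is_DSet {S : Type*} [Semigroup S] (b : ℕ)
    (hb : ∀ t u : S, {s : S | s * t = u}.Finite ∧ {s : S | s * t = u}.ncard ≤ b)
    (A : Set S) (hthick : ∀ G : Finset S, G.Nonempty → ∃ s : S, ∀ x ∈ G, x * s ∈ A) :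
    ∀ (I : Type u) (_ : Preorder I) (_ : Nonempty I) (F : I → Set S),
      (∀ i, (F i).Finite) → (∀ i, (F i).Nonempty) →
      (∀ i j : I, ∃ k, i ≤ k ∧ j ≤ k) →
      ∃ p : Ultrafilter S, p * p = p ∧ (∀ C ∈ p, 0 < uBD F C) ∧ A ∈ p := by
  intro I hPre hNeI F hfin hne hdir
  classical
  -- `S` is nonempty
  have i₁ : I := Classical.arbitrary I
  obtain ⟨x₀, hx₀⟩ := hne i₁
  have hSne : Nonempty S := ⟨x₀⟩
  -- `b` is positive
  have hbpos : 0 < b := by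
    have h1 : 0 < {s : S | s * x₀ = x₀ * x₀}.ncard :=
      (Set.ncard_pos (hb x₀ (x₀ * x₀)).1).2 ⟨x₀, rfl⟩
    exact lt_of_lt_of_le h1 (hb x₀ (x₀ * x₀)).2
  -- the two distinguished subsets of `βS`
  set D : Set (Ultrafilter S) := {p | ∀ C ∈ p, 0 < uBD F C} with hD
  set L : Set (Ultrafilter S) := {p | A ∈ p ∧ ∀ a : S, {x : S | a * x ∈ A} ∈ p} with hL
  -- `L` is nonempty, by thickness
  have hLne : L.Nonempty := by
    have hFIP : ∀ T : Finset (Set S),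
        (↑T : Set (Set S)) ⊆ insert A {X : Set S | ∃ a : S, X = {x : S | a * x ∈ A}} →
        (⋂₀ (↑T : Set (Set S))).Nonempty := by
      intro T hT
      -- choose a shift witness for each member of `T`
      set w : Set S → S := fun X =>
        if h : ∃ a : S, X = {x : S | a * x ∈ A} then h.choose else x₀ with hw
      set G : Finset S := insert x₀ ((T.image w).image (· * x₀)) with hG
      obtain ⟨s, hs⟩ := hthick G (Finset.insert_nonempty _ _)
      refine ⟨x₀ * s, ?_⟩
      intro X hX
      rcases hT hX with hXA | ⟨a, ha⟩
      · subst hXA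
        exact hs x₀ (Finset.mem_insert_self _ _)
      · have hwX : X = {x : S | w X * x ∈ A} := by
          rw [hw]
          simp only
          rw [dif_pos ⟨a, ha⟩]
          exact (⟨a, ha⟩ : ∃ a : S, X = {x : S | a * x ∈ A}).choose_spec
        rw [hwX]
        have hmem : w X * x₀ ∈ G := by
          refine Finset.mem_insert_of_mem ?_
          exact Finset.mem_image_of_mem _ (Finset.mem_image_of_mem _ hX)
        have := hs (w X * x₀) hmem
        show w X * (x₀ * s) ∈ A
        rwa [← mul_assoc]
    obtain ⟨p₀, hp₀⟩ := Ultrafilter.exists_ultrafilter_of_finite_inter_nonempty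
      (insert A {X : Set S | ∃ a : S, X = {x : S | a * x ∈ A}}) hFIP
    refine ⟨p₀, hp₀ (Set.mem_insert _ _), fun a => hp₀ ?_⟩
    exact Set.mem_insert_iff.2 (Or.inr ⟨a, rfl⟩)
  -- `L` is a left ideal
  have hLleft : ∀ q ∈ L, ∀ r : Ultrafilter S, r * q ∈ L := by
    rintro q ⟨hq1, hq2⟩ r
    constructor
    · rw [mem_ultra_mul_iff]
      have : {m : S | {m' : S | m * m' ∈ A} ∈ q} = Set.univ :=
        Set.eq_univ_of_forall fun m => hq2 m
      rw [this]
      exact Filter.univ_mem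
    · intro a
      rw [mem_ultra_mul_iff]
      have : {m : S | {m' : S | a * (m * m') ∈ A} ∈ q} = Set.univ := by
        refine Set.eq_univ_of_forall fun m => ?_
        have := hq2 (a * m)
        simpa only [mul_assoc, Set.mem_setOf_eq] using this
      show {m : S | {m' : S | a * (m * m') ∈ A} ∈ q} ∈ r
      rw [this]
      exact Filter.univ_mem
  -- `D` is nonempty
  have hDne : D.Nonempty := by
    have hFIP : ∀ T : Finset (Set S),
        (↑T : Set (Set S)) ⊆ {X : Set S | ¬ (0 < uBD F Xᶜ)} →
        (⋂₀ (↑T : Set (Set S))).Nonempty := by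
      intro T hT
      -- the union of the complements is a "null" set
      have hnull : ¬ ∃ α > 0, dgood F (⋃ X ∈ T, Xᶜ) α := by
        induction T using Finset.induction_on with
        | empty =>
            rintro ⟨α, hα, hg⟩
            obtain ⟨i, -, s, hle⟩ := hg i₁
            have hn : 0 < ((F i).ncard : ℝ) := by
              exact_mod_cast (Set.ncard_pos (hfin i)).2 (hne i)
            simp only [Finset.notMem_empty, Set.iUnion_of_empty, Set.iUnion_empty,
              Set.empty_inter, Set.ncard_empty, Nat.cast_zero] at hle
            nlinarith
        | @insert X T' hx ih =>
            have hX : X ∈ ({Y : Set S | ¬ (0 < uBD F Yᶜ)} : Set (Set S)) :=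
              hT (by simp)
            have hT' : ↑T' ⊆ {Y : Set S | ¬ (0 < uBD F Yᶜ)} := by
              intro Y hY
              exact hT (by simp [hY])
            have h1 : ¬ ∃ α > 0, dgood F Xᶜ α := by
              intro h
              exact hX ((uBD_pos_iff hfin hne _).2 h)
            have h2 := ih hT'
            have := dgood_union hdir h1 h2
            intro h
            apply this
            convert h using 3
            simp [Set.biUnion_insert]
      -- hence its complement is nonempty
      have hne' : (⋂₀ (↑T : Set (Set S))).Nonempty := by
        have hcompl : ⋂₀ (↑T : Set (Set S)) = (⋃ X ∈ T, Xᶜ)ᶜ := by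
          ext y
          simp [Set.mem_sInter]
        rw [hcompl]
        rw [Set.nonempty_compl]
        intro huniv
        apply hnull
        refine ⟨1, one_pos, fun i₀ => ⟨i₀, le_refl _, none, ?_⟩⟩
        rw [huniv, Set.univ_inter, one_mul]
        show ((F i₀).ncard : ℝ) ≤ ((netShift (F i₀) none).ncard : ℝ)
        exact le_refl _
      exact hne'
    obtain ⟨q₀, hq₀⟩ := Ultrafilter.exists_ultrafilter_of_finite_inter_nonempty
      {X : Set S | ¬ (0 < uBD F Xᶜ)} hFIP
    refine ⟨q₀, fun C hC => ?_⟩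
    by_contra hpos
    have h1 : Cᶜ ∈ q₀ := hq₀ (by simpa using hpos)
    exact (Ultrafilter.compl_mem_iff_notMem.1 h1) hC
  -- `D` is a right ideal
  have hDright : ∀ q ∈ D, ∀ r : Ultrafilter S, q * r ∈ D := by
    intro q hq r C hC
    rw [mem_ultra_mul_iff] at hC
    have hBpos := hq _ hC
    obtain ⟨α, hα, hg⟩ := (uBD_pos_iff hfin hne _).1 hBpos
    refine (uBD_pos_iff hfin hne _).2 ⟨α / b, ?_, ?_⟩
    · have : (0 : ℝ) < b := by exact_mod_cast hbpos
      positivity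
    · exact dgood_pull hfin hbpos hb hα hg
  -- `D ∩ L` is a nonempty closed subsemigroup of `βS`
  obtain ⟨d₀, hd₀⟩ := hDne
  obtain ⟨l₀, hl₀⟩ := hLne
  have hKne : (D ∩ L).Nonempty := ⟨d₀ * l₀, hDright d₀ hd₀ l₀, hLleft l₀ hl₀ d₀⟩
  have hKmul : ∀ p ∈ D ∩ L, ∀ q ∈ D ∩ L, p * q ∈ D ∩ L := fun p hp q hq =>
    ⟨hDright p hp.1 q, hLleft q hq.2 p⟩
  have hDclosed : IsClosed D := by
    have hDeq : D = ⋂ C ∈ {C : Set S | ¬ (0 < uBD F C)}, {p : Ultrafilter S | Cᶜ ∈ p} := by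
      ext p
      simp only [Set.mem_iInter, Set.mem_setOf_eq, hD]
      constructor
      · intro hp C hC
        exact Ultrafilter.compl_mem_iff_notMem.2 fun hCp => hC (hp C hCp)
      · intro hp C hCp
        by_contra hC
        exact (Ultrafilter.compl_mem_iff_notMem.1 (hp C hC)) hCp
    rw [hDeq]
    exact isClosed_biInter fun C _ => ultrafilter_isClosed_basic _
  have hLclosed : IsClosed L := by
    have hLeq : L = {p : Ultrafilter S | A ∈ p} ∩
        ⋂ a : S, {p : Ultrafilter S | {x : S | a * x ∈ A} ∈ p} := by
      ext p
      simp only [Set.mem_inter_iff, Set.mem_iInter, Set.mem_setOf_eq, hL]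
    rw [hLeq]
    exact (ultrafilter_isClosed_basic _).inter (isClosed_iInter fun a => ultrafilter_isClosed_basic _)
  have hKcompact : IsCompact (D ∩ L) := (hDclosed.inter hLclosed).isCompact
  -- apply the Ellis-type idempotent lemma
  letI : Semigroup (Ultrafilter S) := Ultrafilter.semigroup
  obtain ⟨p, hpK, hpp⟩ := exists_idempotent_in_compact_subsemigroup
    (fun r => Ultrafilter.continuous_mul_left r) (D ∩ L) hKne hKcompact hKmul
  exact ⟨p, hpp, hpK.1, hpK.2.1⟩
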